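/- Let n ≥ 2, a > 0, and let f : ℝ → ℂ be infinitely differentiable on (-a, a) and satisfy f⁽ⁿ⁾(x) + b_{n-1}(x)·f⁽ⁿ⁻¹⁾(x) + ⋯ + b_0(x)·f(x) = 0 for all x ∈ (-a, a) \ {0}, where b_k : ℝ → ℂ satisfy |b_k(x)| = O(1/|x|^{n-k}) as x → 0 for each k = 0, 1, …, n-1. Set C_n = max_{0 ≤ k ≤ n-1} limsup_{x → 0} |x|^{n-k}·|b_k(x)| and B_n = Σ_{k=0}^{n-1} 1/k!. If f⁽ᵏ⁾(0) = 0 for every integer k ≤ B_n·C_n + n - 1, then there exists δ > 0 such that f ≡ 0 on [-δ, δ]. -/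

import Mathlib

open Filter Topology intervalIntegral

lemma lemA (u v : ℝ → ℂ) (r K : ℝ) (q : ℕ) (hu0 : u 0 = 0)
    (hd : ∀ t ∈ Set.Icc (-r) r, HasDerivAt u (v t) t)
    (hc : ContinuousOn v (Set.Icc (-r) r))
    (hb : ∀ t ∈ Set.Icc (-r) r, ‖v t‖ ≤ K * |t| ^ q) :
    ∀ x ∈ Set.Icc (-r) r, ‖u x‖ ≤ K / (q + 1) * |x| ^ (q + 1) := by
  intro x hx
  have hr : (0:ℝ) ≤ r := by
    rcases hx with ⟨h1, h2⟩; linarith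
  have h0 : (0:ℝ) ∈ Set.Icc (-r) r := by constructor <;> linarith
  have hsub : Set.uIcc (0:ℝ) x ⊆ Set.Icc (-r) r := Set.uIcc_subset_Icc h0 hx
  have hInt : IntervalIntegrable v MeasureTheory.volume 0 x :=
    (hc.mono hsub).intervalIntegrable
  have hftc : ∫ t in (0:ℝ)..x, v t = u x - u 0 :=
    integral_eq_sub_of_hasDerivAt (fun t ht => hd t (hsub ht)) hInt
  have hux : u x = ∫ t in (0:ℝ)..x, v t := by rw [hftc, hu0, sub_zero]
  have hq1 : (0:ℝ) < (q:ℝ) + 1 := by positivity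
  rw [hux]
  rcases le_or_gt 0 x with hx0 | hx0
  · have hIcc : Set.Icc (0:ℝ) x ⊆ Set.Icc (-r) r := by
      intro t ht; exact ⟨by linarith [ht.1], le_trans ht.2 hx.2⟩
    calc ‖∫ t in (0:ℝ)..x, v t‖ ≤ ∫ t in (0:ℝ)..x, ‖v t‖ :=
          norm_integral_le_integral_norm hx0
      _ ≤ ∫ t in (0:ℝ)..x, K * t ^ q := by
          apply integral_mono_on hx0
          · exact ((hc.mono hIcc).norm).intervalIntegrable_of_Icc hx0
          · exact (Continuous.intervalIntegrable (by continuity) 0 x)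
          · intro t ht
            have := hb t (hIcc ht)
            rwa [abs_of_nonneg ht.1] at this
      _ = K * ((x ^ (q+1) - 0 ^ (q+1)) / (q + 1)) := by
          rw [integral_const_mul, integral_pow]
      _ = K / (q + 1) * |x| ^ (q + 1) := by
          rw [abs_of_nonneg hx0]; ring
  · have hIcc : Set.Icc x (0:ℝ) ⊆ Set.Icc (-r) r := by
      intro t ht; exact ⟨le_trans hx.1 ht.1, by linarith [ht.2]⟩
    have hxle : x ≤ 0 := hx0.le
    rw [integral_symm, norm_neg]
    calc ‖∫ t in x..(0:ℝ), v t‖ ≤ ∫ t in x..(0:ℝ), ‖v t‖ :=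
          norm_integral_le_integral_norm hxle
      _ ≤ ∫ t in x..(0:ℝ), K * (-t) ^ q := by
          apply integral_mono_on hxle
          · exact ((hc.mono hIcc).norm).intervalIntegrable_of_Icc hxle
          · exact (Continuous.intervalIntegrable (by continuity) x 0)
          · intro t ht
            have := hb t (hIcc ht)
            rwa [abs_of_nonpos ht.2] at this
      _ = K * ∫ t in x..(0:ℝ), (-t) ^ q := integral_const_mul _ _
      _ = K * ((-x) ^ (q+1) - 0 ^ (q+1)) / (q + 1) := by
          rw [show (∫ t in x..(0:ℝ), (-t) ^ q) = ∫ t in (-0:ℝ)..(-x), t ^ q from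
            integral_comp_neg (fun t => t ^ q), neg_zero, integral_pow]
          ring
      _ = K / (q + 1) * |x| ^ (q + 1) := by
          rw [abs_of_nonpos hxle]; ring


lemma bound_at_zero (φ : ℝ → ℂ) (K r : ℝ) (q : ℕ) (hr : 0 < r)
    (hφ : ContinuousAt φ 0)
    (h : ∀ t, t ≠ 0 → t ∈ Set.Icc (-r) r → ‖φ t‖ ≤ K * |t| ^ q) :
    ‖φ 0‖ ≤ K * |(0:ℝ)| ^ q := by
  have hne : (𝓝[>] (0:ℝ)).NeBot := inferInstance
  have h1 : Tendsto (fun t => ‖φ t‖) (𝓝[>] (0:ℝ)) (𝓝 ‖φ 0‖) :=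
    (hφ.norm.tendsto).mono_left nhdsWithin_le_nhds
  have h2 : Tendsto (fun t : ℝ => K * |t| ^ q) (𝓝[>] (0:ℝ)) (𝓝 (K * |(0:ℝ)| ^ q)) := by
    exact (Continuous.tendsto (by continuity) 0).mono_left nhdsWithin_le_nhds
  refine le_of_tendsto_of_tendsto h1 h2 ?_
  have hmem : Set.Ioo (0:ℝ) r ∈ 𝓝[>] (0:ℝ) := Ioo_mem_nhdsGT_of_mem ⟨le_refl _, hr⟩
  filter_upwards [hmem] with t ht
  exact h t (ne_of_gt ht.1) ⟨by linarith [ht.1], ht.2.le⟩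



/-- Proposition 8 (Pan–Wang): if `|b_k(x)| = O(1/|x|^(n-k))` as `x → 0` and
`f⁽ᵏ⁾(0) = 0` for every `k ≤ B_n C_n + n - 1`, where `C_n` is the largest of the
limsups of `|x|^(n-k) |b_k(x)|`, then `f ≡ 0` near `0`. -/
theorem uniqueness_bigO
    (n : ℕ) (hn : 2 ≤ n) (a : ℝ) (ha : 0 < a)
    (f : ℝ → ℂ) (b : ℕ → ℝ → ℂ)
    (hsmooth : ∀ k : ℕ, ∀ x ∈ Set.Ioo (-a) a, DifferentiableAt ℝ (iteratedDeriv k f) x)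
    (hode : ∀ x ∈ Set.Ioo (-a) a, x ≠ 0 →
      iteratedDeriv n f x + ∑ k ∈ Finset.range n, b k x * iteratedDeriv k f x = 0)
    (hO : ∀ k < n, Filter.IsBoundedUnder (· ≤ ·) (𝓝[≠] (0 : ℝ))
      (fun x : ℝ => |x| ^ (n - k) * ‖b k x‖))
    (Cn : ℝ)
    (hCn : Cn = (Finset.range n).sup' (Finset.nonempty_range_iff.mpr (by omega))
      (fun k => Filter.limsup (fun x : ℝ => |x| ^ (n - k) * ‖b k x‖) (𝓝[≠] (0 : ℝ))))
    (hinit : ∀ k : ℕ,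
      (k : ℝ) ≤ (∑ j ∈ Finset.range n, (1 : ℝ) / j.factorial) * Cn + n - 1 →
      iteratedDeriv k f 0 = 0) :
    ∃ δ > 0, ∀ x ∈ Set.Icc (-δ) δ, f x = 0 := by
  obtain ⟨B, hBdef⟩ : ∃ B : ℝ, B = ∑ j ∈ Finset.range n, (1 : ℝ) / j.factorial := ⟨_, rfl⟩
  rw [← hBdef] at hinit
  -- basic facts about B and Cn
  have hB1 : (1:ℝ) ≤ B := by
    have h0 : (0:ℕ) ∈ Finset.range n := Finset.mem_range.mpr (by omega)
    have h1 := Finset.single_le_sum (f := fun j : ℕ => (1:ℝ)/j.factorial)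
      (fun i _ => by positivity) h0
    rw [← hBdef] at h1
    simpa using h1
  have hBpos : (0:ℝ) < B := by linarith
  have hC0 : 0 ≤ Cn := by
    have h0 : (0:ℕ) ∈ Finset.range n := Finset.mem_range.mpr (by omega)
    have h1 : (0:ℝ) ≤ Filter.limsup (fun x : ℝ => |x| ^ (n - 0) * ‖b 0 x‖) (𝓝[≠] (0:ℝ)) := by
      apply Filter.le_limsup_of_frequently_le
      · exact (Filter.Eventually.of_forall (fun x => by positivity)).frequently
      · exact hO 0 (by omega)
    have h2 : Filter.limsup (fun x : ℝ => |x| ^ (n - 0) * ‖b 0 x‖) (𝓝[≠] (0:ℝ)) ≤ Cn := by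
      rw [hCn]
      exact Finset.le_sup'
        (fun j => Filter.limsup (fun x : ℝ => |x| ^ (n - j) * ‖b j x‖) (𝓝[≠] (0:ℝ))) h0
    linarith
  obtain ⟨q0, hq0def⟩ : ∃ q0 : ℕ, q0 = ⌊B * Cn⌋₊ := ⟨_, rfl⟩
  have hq0le : (q0 : ℝ) ≤ B * Cn := hq0def ▸ Nat.floor_le (by positivity)
  have hq0lt : B * Cn < (q0 : ℝ) + 1 := hq0def ▸ Nat.lt_floor_add_one _
  obtain ⟨C', hC'def⟩ : ∃ C' : ℝ, C' = Cn + (((q0:ℝ) + 1) - B * Cn) / (2 * B) := ⟨_, rfl⟩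
  have hCnltC' : Cn < C' := by
    have h2 : 0 < (((q0:ℝ) + 1) - B * Cn) / (2 * B) := by
      apply div_pos (by linarith) (by linarith)
    rw [hC'def]; linarith
  have hC'0 : 0 ≤ C' := le_trans hC0 hCnltC'.le
  have hBC' : B * C' < (q0:ℝ) + 1 := by
    rw [hC'def]
    rw [mul_add]
    have : B * ((((q0:ℝ) + 1) - B * Cn) / (2 * B)) = (((q0:ℝ) + 1) - B * Cn) / 2 := by
      field_simp
    rw [this]; linarith
  obtain ⟨m, hmdef⟩ : ∃ m : ℕ, m = n - 1 + q0 := ⟨_, rfl⟩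
  have hm1 : m + 1 = n + q0 := by omega
  -- vanishing of derivatives up to order m
  have hvanish : ∀ k ≤ m, iteratedDeriv k f 0 = 0 := by
    intro k hk
    apply hinit
    have hkm : (k:ℝ) ≤ (m:ℝ) := by exact_mod_cast hk
    have hmcast : (m:ℝ) = (n:ℝ) - 1 + (q0:ℝ) := by
      rw [hmdef]; push_cast [Nat.cast_sub (by omega : 1 ≤ n)]; ring
    rw [hmcast] at hkm
    linarith
  -- choose r
  have hevk : ∀ k ∈ Finset.range n, ∀ᶠ x in 𝓝[≠] (0:ℝ), |x| ^ (n - k) * ‖b k x‖ < C' := by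
    intro k hk
    have h2 : Filter.limsup (fun x : ℝ => |x| ^ (n - k) * ‖b k x‖) (𝓝[≠] (0:ℝ)) ≤ Cn := by
      rw [hCn]
      exact Finset.le_sup'
        (fun j => Filter.limsup (fun x : ℝ => |x| ^ (n - j) * ‖b j x‖) (𝓝[≠] (0:ℝ))) hk
    exact Filter.eventually_lt_of_limsup_lt (lt_of_le_of_lt h2 hCnltC')
      (hO k (Finset.mem_range.mp hk))
  have hev : ∀ᶠ x in 𝓝[≠] (0:ℝ), ∀ k ∈ Finset.range n, |x| ^ (n - k) * ‖b k x‖ < C' :=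
    (Filter.eventually_all_finset _).mpr hevk
  rw [Filter.Eventually, Metric.mem_nhdsWithin_iff] at hev
  obtain ⟨ε, hε, hball⟩ := hev
  obtain ⟨r, hrdef⟩ : ∃ r : ℝ, r = min (ε / 2) (a / 2) := ⟨_, rfl⟩
  have hr0 : 0 < r := hrdef ▸ lt_min (by linarith) (by linarith)
  have hra : r < a := hrdef ▸ lt_of_le_of_lt (min_le_right _ _) (by linarith)
  have hbnd : ∀ x : ℝ, x ≠ 0 → |x| ≤ r → ∀ k, k < n → |x| ^ (n - k) * ‖b k x‖ ≤ C' := by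
    intro x hx hxr k hk
    have hxball : x ∈ Metric.ball (0:ℝ) ε ∩ {(0:ℝ)}ᶜ := by
      constructor
      · rw [Metric.mem_ball, Real.dist_eq, sub_zero]
        calc |x| ≤ r := hxr
          _ ≤ ε / 2 := hrdef ▸ min_le_left _ _
          _ < ε := by linarith
      · simpa using hx
    exact (hball hxball k (Finset.mem_range.mpr hk)).le
  have hIccIoo : Set.Icc (-r) r ⊆ Set.Ioo (-a) a := by
    intro x hx
    have := abs_le.mpr ⟨hx.1, hx.2⟩
    rw [abs_le] at this
    constructor <;> [linarith [this.1]; linarith [this.2]]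
  have h0Icc : (0:ℝ) ∈ Set.Icc (-r) r := ⟨by linarith, by linarith⟩
  have hderiv : ∀ k : ℕ, ∀ t ∈ Set.Icc (-r) r,
      HasDerivAt (iteratedDeriv k f) (iteratedDeriv (k+1) f t) t := by
    intro k t ht
    rw [iteratedDeriv_succ]
    exact (hsmooth k t (hIccIoo ht)).hasDerivAt
  have hcont : ∀ k : ℕ, ContinuousOn (iteratedDeriv k f) (Set.Icc (-r) r) :=
    fun k t ht => ((hsmooth k t (hIccIoo ht)).continuousAt).continuousWithinAt
  -- bound L on the (m+1)-st derivative
  obtain ⟨L, hL⟩ := isCompact_Icc.exists_bound_of_continuousOn (hcont (m+1))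
  have hL0 : 0 ≤ L := le_trans (norm_nonneg _) (hL 0 h0Icc)
  -- Taylor-type bound
  have hLemB : ∀ j k : ℕ, k + j = m + 1 → ∀ x ∈ Set.Icc (-r) r,
      ‖iteratedDeriv k f x‖ ≤ L / (j.factorial : ℝ) * |x| ^ j := by
    intro j
    induction j with
    | zero =>
      intro k hk x hx
      have : k = m + 1 := by omega
      subst this
      simpa using hL x hx
    | succ j ih =>
      intro k hk x hx
      have hcst : L / ((j.factorial : ℝ)) / ((j:ℝ) + 1) = L / ((j+1).factorial : ℝ) := by
        rw [Nat.factorial_succ, div_div]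
        push_cast
        ring_nf
      have := lemA (iteratedDeriv k f) (iteratedDeriv (k+1) f) r (L / (j.factorial : ℝ)) j
        (hvanish k (by omega)) (hderiv k) (hcont (k+1)) (ih (k+1) (by omega)) x hx
      rw [hcst] at this
      exact this
  -- the weighted sup S
  obtain ⟨S, hSdef⟩ : ∃ S : ℝ, S = sSup ((fun x => ‖iteratedDeriv (n-1) f x‖ / |x| ^ (q0+1)) ''
      (Set.Icc (-r) r)) := ⟨_, rfl⟩
  have hbddS : BddAbove ((fun x => ‖iteratedDeriv (n-1) f x‖ / |x| ^ (q0+1)) ''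
      (Set.Icc (-r) r)) := by
    refine ⟨L / ((q0+1).factorial : ℝ), ?_⟩
    rintro y ⟨x, hx, rfl⟩
    by_cases hx0 : x = 0
    · subst hx0
      simp only [abs_zero, zero_pow (by omega : q0+1 ≠ 0), div_zero]
      positivity
    · have hpow : (0:ℝ) < |x| ^ (q0+1) := pow_pos (abs_pos.mpr hx0) _
      rw [div_le_iff₀ hpow]
      exact hLemB (q0+1) (n-1) (by omega) x hx
  have hSne : ((fun x => ‖iteratedDeriv (n-1) f x‖ / |x| ^ (q0+1)) ''
      (Set.Icc (-r) r)).Nonempty := ⟨_, ⟨0, h0Icc, rfl⟩⟩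
  have hS0 : 0 ≤ S := by
    rw [hSdef]
    have : (0:ℝ) ∈ (fun x => ‖iteratedDeriv (n-1) f x‖ / |x| ^ (q0+1)) '' (Set.Icc (-r) r) := by
      refine ⟨0, h0Icc, ?_⟩
      simp [zero_pow (by omega : q0+1 ≠ 0)]
    exact le_csSup hbddS this
  have hSprop : ∀ x ∈ Set.Icc (-r) r, ‖iteratedDeriv (n-1) f x‖ ≤ S * |x| ^ (q0+1) := by
    intro x hx
    by_cases hx0 : x = 0
    · subst hx0
      rw [hvanish (n-1) (by omega)]
      simp
    · have hpow : (0:ℝ) < |x| ^ (q0+1) := pow_pos (abs_pos.mpr hx0) _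
      have h1 : ‖iteratedDeriv (n-1) f x‖ / |x| ^ (q0+1) ≤ S :=
        hSdef ▸ le_csSup hbddS ⟨x, hx, rfl⟩
      rw [div_le_iff₀ hpow] at h1
      linarith
  -- Claim D: weighted bounds for lower derivatives
  have hD : ∀ j : ℕ, j ≤ n - 1 → ∀ x ∈ Set.Icc (-r) r,
      ‖iteratedDeriv (n-1-j) f x‖ ≤ S / (j.factorial : ℝ) * |x| ^ (q0+1+j) := by
    intro j
    induction j with
    | zero =>
      intro _ x hx
      simpa using hSprop x hx
    | succ j ih =>
      intro hj x hx
      have hdj : ∀ t ∈ Set.Icc (-r) r,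
          HasDerivAt (iteratedDeriv (n-1-(j+1)) f) (iteratedDeriv (n-1-j) f t) t := by
        intro t ht
        have e : n-1-(j+1)+1 = n-1-j := by omega
        have := hderiv (n-1-(j+1)) t ht
        rwa [e] at this
      have := lemA (iteratedDeriv (n-1-(j+1)) f) (iteratedDeriv (n-1-j) f) r
        (S / (j.factorial : ℝ)) (q0+1+j)
        (hvanish (n-1-(j+1)) (by omega)) hdj (hcont (n-1-j)) (ih (by omega)) x hx
      refine le_trans this ?_
      have e2 : q0+1+j+1 = q0+1+(j+1) := by omega
      rw [e2]
      apply mul_le_mul_of_nonneg_right _ (by positivity)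
      rw [Nat.factorial_succ]
      have hfj : (0:ℝ) < (j.factorial : ℝ) := by exact_mod_cast j.factorial_pos
      rw [div_div]
      push_cast
      apply div_le_div_of_nonneg_left hS0 (by positivity)
      nlinarith [hfj]
  -- bound on the n-th derivative
  have hfn : ∀ x ∈ Set.Icc (-r) r, x ≠ 0 →
      ‖iteratedDeriv n f x‖ ≤ C' * S * B * |x| ^ q0 := by
    intro x hx hx0
    have heq : iteratedDeriv n f x = -∑ k ∈ Finset.range n, b k x * iteratedDeriv k f x := by
      have := hode x (hIccIoo hx) hx0
      linear_combination this
    rw [heq, norm_neg]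
    have habs : |x| ≤ r := abs_le.mpr ⟨hx.1, hx.2⟩
    calc ‖∑ k ∈ Finset.range n, b k x * iteratedDeriv k f x‖
        ≤ ∑ k ∈ Finset.range n, ‖b k x * iteratedDeriv k f x‖ := norm_sum_le _ _
      _ ≤ ∑ k ∈ Finset.range n, C' * (S / ((n-1-k).factorial : ℝ)) * |x| ^ q0 := by
          apply Finset.sum_le_sum
          intro k hk
          have hkn : k < n := Finset.mem_range.mp hk
          rw [norm_mul]
          have hDk : ‖iteratedDeriv k f x‖ ≤
              S / ((n-1-k).factorial : ℝ) * |x| ^ (q0+1+(n-1-k)) := by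
            have := hD (n-1-k) (by omega) x hx
            have e : n-1-(n-1-k) = k := by omega
            rwa [e] at this
          have hxsplit : |x| ^ (q0+1+(n-1-k)) = |x| ^ q0 * |x| ^ (n-k) := by
            rw [← pow_add]
            congr 1
            omega
          have hbk : |x| ^ (n-k) * ‖b k x‖ ≤ C' := hbnd x hx0 habs k hkn
          calc ‖b k x‖ * ‖iteratedDeriv k f x‖
              ≤ ‖b k x‖ * (S / ((n-1-k).factorial : ℝ) * (|x| ^ q0 * |x| ^ (n-k))) := by
                apply mul_le_mul_of_nonneg_left _ (norm_nonneg _)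
                rw [← hxsplit]
                exact hDk
            _ = (|x| ^ (n-k) * ‖b k x‖) * (S / ((n-1-k).factorial : ℝ) * |x| ^ q0) := by ring
            _ ≤ C' * (S / ((n-1-k).factorial : ℝ) * |x| ^ q0) := by
                apply mul_le_mul_of_nonneg_right hbk
                positivity
            _ = C' * (S / ((n-1-k).factorial : ℝ)) * |x| ^ q0 := by ring
      _ = C' * S * (∑ k ∈ Finset.range n, (1:ℝ) / ((n-1-k).factorial : ℝ)) * |x| ^ q0 := by
          simp only [Finset.mul_sum, Finset.sum_mul]
          exact Finset.sum_congr rfl fun k _ => by ring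
      _ = C' * S * B * |x| ^ q0 := by
          congr 1
          congr 1
          congr 1
          rw [hBdef]
          exact Finset.sum_range_reflect (fun j => (1:ℝ) / (j.factorial : ℝ)) n
  have hfnall : ∀ t ∈ Set.Icc (-r) r, ‖iteratedDeriv n f t‖ ≤ C' * S * B * |t| ^ q0 := by
    intro t ht
    by_cases ht0 : t = 0
    · subst ht0
      exact bound_at_zero (iteratedDeriv n f) (C' * S * B) r q0 hr0
        (hsmooth n 0 (hIccIoo h0Icc)).continuousAt (fun t htne htIcc => hfn t htIcc htne)
    · exact hfn t ht ht0
  -- the contraction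
  have hdn : ∀ t ∈ Set.Icc (-r) r,
      HasDerivAt (iteratedDeriv (n-1) f) (iteratedDeriv n f t) t := by
    intro t ht
    have e : n-1+1 = n := by omega
    have := hderiv (n-1) t ht
    rwa [e] at this
  have hkey : ∀ x ∈ Set.Icc (-r) r,
      ‖iteratedDeriv (n-1) f x‖ ≤ (C' * S * B) / ((q0:ℝ)+1) * |x| ^ (q0+1) := by
    intro x hx
    exact lemA (iteratedDeriv (n-1) f) (iteratedDeriv n f) r (C' * S * B) q0
      (hvanish (n-1) (by omega)) hdn (hcont n) hfnall x hx
  have hθ : C' * B / ((q0:ℝ)+1) < 1 := by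
    rw [div_lt_one (by positivity)]
    linarith
  have hSθ : S ≤ (C' * B / ((q0:ℝ)+1)) * S := by
    conv_lhs => rw [hSdef]
    apply csSup_le hSne
    rintro y ⟨x, hx, rfl⟩
    by_cases hx0 : x = 0
    · subst hx0
      simp only [abs_zero, zero_pow (by omega : q0+1 ≠ 0), div_zero]
      exact mul_nonneg (by positivity) hS0
    · have hpow : (0:ℝ) < |x| ^ (q0+1) := pow_pos (abs_pos.mpr hx0) _
      rw [div_le_iff₀ hpow]
      calc ‖iteratedDeriv (n-1) f x‖ ≤ (C' * S * B) / ((q0:ℝ)+1) * |x| ^ (q0+1) := hkey x hx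
        _ = (C' * B / ((q0:ℝ)+1)) * S * |x| ^ (q0+1) := by ring
  have hSzero : S = 0 := by
    nlinarith [hSθ, hS0, hθ]
  have hgzero : ∀ x ∈ Set.Icc (-r) r, iteratedDeriv (n-1) f x = 0 := by
    intro x hx
    have := hSprop x hx
    rw [hSzero, zero_mul] at this
    exact norm_le_zero_iff.mp this
  -- propagate down to f itself
  have hZ : ∀ j : ℕ, j ≤ n - 1 → ∀ x ∈ Set.Icc (-r) r, iteratedDeriv (n-1-j) f x = 0 := by
    intro j
    induction j with
    | zero => intro _ x hx; exact hgzero x hx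
    | succ j ih =>
      intro hj x hx
      have hdj : ∀ t ∈ Set.Icc (-r) r,
          HasDerivAt (iteratedDeriv (n-1-(j+1)) f) (iteratedDeriv (n-1-j) f t) t := by
        intro t ht
        have e : n-1-(j+1)+1 = n-1-j := by omega
        have := hderiv (n-1-(j+1)) t ht
        rwa [e] at this
      have hb0 : ∀ t ∈ Set.Icc (-r) r, ‖iteratedDeriv (n-1-j) f t‖ ≤ (0:ℝ) * |t| ^ (0:ℕ) := by
        intro t ht
        rw [ih (by omega) t ht]
        simp
      have := lemA (iteratedDeriv (n-1-(j+1)) f) (iteratedDeriv (n-1-j) f) r 0 0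
        (hvanish (n-1-(j+1)) (by omega)) hdj (hcont (n-1-j)) hb0 x hx
      simp only [zero_div, zero_mul] at this
      exact norm_le_zero_iff.mp this
  refine ⟨r, hr0, fun x hx => ?_⟩
  have := hZ (n-1) (le_refl _) x hx
  rwa [Nat.sub_self, iteratedDeriv_zero] at this
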